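/- In the k-deficient roundabout exploration model, let t ∈ [N] and let r be an integer with 2k + 1 ≤ r ≤ N. If at least r agents remain active after t steps, i.e., |A(t)| ≥ r, then t ≤ (2N − r)/(r − 2k). -/

import Mathlib

/-- The circular interval `⟨i, j⟩` on `Fin N`: all states encountered when moving
forward from `i` to `j` along the cycle `(0, 1, …, N-1, 0)`. -/
def cInt {N : ℕ} (i j : Fin N) : Set (Fin N) := {x | (x - i).val ≤ (j - i).val}

/-- The half-open circular interval `⟨i, j)` on `Fin N`, which excludes the right
endpoint `j`. -/
def cIntHalf {N : ℕ} (i j : Fin N) : Set (Fin N) := cInt i j \ {j}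

/-- The roundabout exploration model on the state set `Fin N`:
`avail t` is the set of positions available at step `t` (steps `t = 1, …, N` are
relevant), `state i t` is the state of agent `a_i` after step `t`, and `active t`
is the set of (indices of) active agents after step `t`. Agent `a_i` starts at
state `i`, moves forward one position (cyclically) at step `t` whenever its
current position is available, and stays put otherwise. Active agents satisfy:
initially all agents are active, the active sets are decreasing, elimination
preserves coverage of visited states, and every active agent is non-redundant. -/
structure Roundabout (N : ℕ) [NeZero N] where
  avail : ℕ → Set (Fin N)
  state : Fin N → ℕ → Fin N
  active : ℕ → Set (Fin N)
  state_zero : ∀ i, state i 0 = i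
  state_succ_of_mem : ∀ i t, state i t ∈ avail (t + 1) → state i (t + 1) = state i t + 1
  state_succ_of_not_mem : ∀ i t, state i t ∉ avail (t + 1) → state i (t + 1) = state i t
  active_zero : active 0 = Set.univ
  active_mono : ∀ t, active (t + 1) ⊆ active t
  active_cover : ∀ t, (⋃ j ∈ active (t + 1), cInt j (state j (t + 1)))
      = ⋃ j ∈ active t, cInt j (state j (t + 1))
  active_nonredundant : ∀ t, ∀ i ∈ active (t + 1),
      ¬ cInt i (state i (t + 1)) ⊆ ⋃ j ∈ active (t + 1) \ {i}, cInt j (state j (t + 1))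

/-- `D_i(t)`, the set of states visited by agent `a_i` up to step `t`. -/
def Roundabout.visited {N : ℕ} [NeZero N] (R : Roundabout N) (i : Fin N) (t : ℕ) :
    Set (Fin N) := cInt i (R.state i t)

/-- The roundabout model is `k`-deficient: at every step `t ∈ [N]`, at most `2k`
positions are unavailable. -/
def Roundabout.KDeficient {N : ℕ} [NeZero N] (R : Roundabout N) (k : ℕ) : Prop :=
  ∀ t : ℕ, 1 ≤ t → t ≤ N → ((R.avail t)ᶜ : Set (Fin N)).ncard ≤ 2 * k

lemma mem_cInt {N : ℕ} {i j x : Fin N} : x ∈ cInt i j ↔ (x - i).val ≤ (j - i).val := Iff.rfl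

lemma modsplit {N w z u : ℕ} (hw : w < N) (hz : z < N) (h : u = (w + z) % N) :
    u = w + z ∨ u + N = w + z := by
  rcases lt_or_ge (w + z) N with h' | h'
  · left; rw [h, Nat.mod_eq_of_lt h']
  · right
    have : (w + z) % N = w + z - N := by
      rw [Nat.mod_eq_sub_mod h', Nat.mod_eq_of_lt (by omega)]
    omega

lemma sub_val_add {N : ℕ} [NeZero N] (a b c : Fin N) :
    (a - c).val = ((a - b).val + (b - c).val) % N := by
  rw [← Fin.val_add, sub_add_sub_cancel]

/-- splitting facts -/
lemma modsplit' {N : ℕ} [NeZero N] (a b c : Fin N) :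
    (a - c).val = (a - b).val + (b - c).val ∨
    (a - c).val + N = (a - b).val + (b - c).val :=
  modsplit (a - b).isLt (b - c).isLt (sub_val_add a b c)

/-- nesting: if `j ∈ ⟨i, σ⟩` then `⟨j, σ⟩ ⊆ ⟨i, σ⟩`. -/
lemma cInt_nest {N : ℕ} [NeZero N] {i j σ : Fin N} (h : (j - i).val ≤ (σ - i).val) :
    cInt j σ ⊆ cInt i σ := by
  intro x hx
  rw [mem_cInt] at hx ⊢
  rcases modsplit' σ j i with h1 | h1
  · rcases modsplit' x j i with h2 | h2
    · omega
    · have := (x - i).isLt; have := (σ - j).isLt; omega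
  · have := (σ - i).isLt; have := (j - i).isLt; omega

/-- splitting: if `x ∈ ⟨i, σ⟩` then `⟨i, σ⟩ ⊆ ⟨i, x⟩ ∪ ⟨x, σ⟩`. -/
lemma cInt_split {N : ℕ} [NeZero N] {i x σ : Fin N} (hx : x ∈ cInt i σ) :
    cInt i σ ⊆ cInt i x ∪ cInt x σ := by
  intro y hy
  rw [mem_cInt] at hx hy
  rcases le_or_gt (y - i).val (x - i).val with h | h
  · exact Or.inl h
  · right
    rw [mem_cInt]
    rcases modsplit' y x i with h1 | h1
    · rcases modsplit' σ x i with h2 | h2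
      · omega
      · have := (σ - i).isLt; have := (x - i).isLt; omega
    · have := (y - i).isLt; have := (x - i).isLt; omega

/-- left mono: arcs ending at `x`, shorter is inside longer. -/
lemma cInt_left_mono {N : ℕ} [NeZero N] {i j x : Fin N} (h : (x - i).val ≤ (x - j).val) :
    cInt i x ⊆ cInt j x := by
  apply cInt_nest
  rcases modsplit' x i j with h1 | h1
  · omega
  · have := (x - j).isLt; have := (i - j).isLt; omega

/-- right mono: arcs starting at `x`. -/
lemma cInt_right_mono {N : ℕ} [NeZero N] {x σ τ : Fin N} (h : (σ - x).val ≤ (τ - x).val) :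
    cInt x σ ⊆ cInt x τ := fun y hy => le_trans hy h

lemma cInt_left_sub {N : ℕ} [NeZero N] {i x σ : Fin N} (hx : x ∈ cInt i σ) :
    cInt i x ⊆ cInt i σ := by
  intro y hy
  rw [mem_cInt] at hy ⊢
  exact le_trans hy hx

lemma cInt_right_sub {N : ℕ} [NeZero N] {i x σ : Fin N} (hx : x ∈ cInt i σ) :
    cInt x σ ⊆ cInt i σ := cInt_nest hx

/-- trichotomy -/
lemma cInt_tricho {N : ℕ} [NeZero N] {i j σ : Fin N} (hij : i ≠ j) :
    (j - i).val ≤ (σ - i).val ∨ (i - j).val ≤ (σ - j).val := by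
  by_contra hc
  push_neg at hc
  obtain ⟨h1, h2⟩ := hc
  have hd : (j - i).val + (i - j).val = N := by
    have h0 : ((j - i) + (i - j)).val = 0 := by
      rw [sub_add_sub_cancel, sub_self, Fin.val_zero]
    rw [Fin.val_add] at h0
    have p1 : (j - i).val ≠ 0 := fun hv =>
      sub_ne_zero.mpr (Ne.symm hij) (Fin.ext (by rw [hv, Fin.val_zero]))
    have p2 : (i - j).val ≠ 0 := fun hv =>
      sub_ne_zero.mpr hij (Fin.ext (by rw [hv, Fin.val_zero]))
    rcases modsplit (j - i).isLt (i - j).isLt h0.symm with h | h <;> omega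
  rcases modsplit' σ j i with h3 | h3
  · rcases modsplit' σ i j with h4 | h4 <;> omega
  · have := (σ - i).isLt; have := (σ - j).isLt
    rcases modsplit' σ i j with h4 | h4 <;> omega

/-- cardinality of a circular interval -/
lemma ncard_cInt {N : ℕ} [NeZero N] (i j : Fin N) : (cInt i j).ncard = (j - i).val + 1 := by
  have himg : cInt i j = (fun c => i + c) '' Set.Iic (j - i) := by
    ext x
    constructor
    · intro hx
      exact ⟨x - i, by rwa [Set.mem_Iic, Fin.le_def], by simp⟩
    · rintro ⟨c, hc, rfl⟩
      rw [Set.mem_Iic, Fin.le_def] at hc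
      simpa [mem_cInt] using hc
  rw [himg, Set.ncard_image_of_injective _ (add_right_injective i),
    ← Finset.coe_Iic, Set.ncard_coe_finset, Fin.card_Iic]


namespace Roundabout

variable {N : ℕ} [NeZero N] (R : Roundabout N)

lemma active_subset {s u : ℕ} (h : s ≤ u) : R.active u ⊆ R.active s := by
  induction u with
  | zero => simpa [Nat.le_zero.mp h] using Set.Subset.rfl
  | succ n ih =>
    rcases Nat.lt_or_ge s (n + 1) with h' | h'
    · exact (R.active_mono n).trans (ih (by omega))
    · have : s = n + 1 := by omega
      subst this; exact Set.Subset.rfl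

lemma state_injOn (u : ℕ) : Set.InjOn (fun i => R.state i u) (R.active u) := by
  intro i hi j hj hst
  simp only at hst
  cases u with
  | zero => rw [R.state_zero, R.state_zero] at hst; exact hst
  | succ s =>
    by_contra hij
    rcases cInt_tricho (σ := R.state i (s + 1)) hij with h | h
    · refine R.active_nonredundant s j hj ?_
      rw [← hst]
      refine (cInt_nest h).trans ?_
      exact Set.subset_biUnion_of_mem (u := fun l => cInt l (R.state l (s+1)))
        (show i ∈ R.active (s+1) \ {j} from ⟨hi, by simp [hij]⟩)
    · refine R.active_nonredundant s i hi ?_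
      rw [hst] at h ⊢
      refine (cInt_nest h).trans ?_
      exact Set.subset_biUnion_of_mem (u := fun l => cInt l (R.state l (s+1)))
        (show j ∈ R.active (s+1) \ {i} from ⟨hj, by simp [Ne.symm hij]⟩)

lemma eq_of_full {s : ℕ} {i : Fin N} (hi : i ∈ R.active (s + 1))
    (hfull : (R.state i (s + 1) - i).val = N - 1) :
    ∀ j ∈ R.active (s + 1), j = i := by
  intro j hj
  by_contra hij
  refine R.active_nonredundant s j hj ?_
  have huniv : ∀ x, x ∈ cInt i (R.state i (s + 1)) := by
    intro x
    rw [mem_cInt, hfull]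
    have := (x - i).isLt
    omega
  have hsub : cInt j (R.state j (s+1)) ⊆ cInt i (R.state i (s+1)) := fun x _ => huniv x
  exact hsub.trans (Set.subset_biUnion_of_mem (u := fun l => cInt l (R.state l (s+1)))
    (show i ∈ R.active (s+1) \ {j} from ⟨hi, by simp [Ne.symm hij]⟩))

open Classical in
/-- number of blocked steps of agent `i` among steps `1..t`. -/
noncomputable def blk (i : Fin N) : ℕ → ℕ
  | 0 => 0
  | (s + 1) => blk i s + if R.state i s ∉ R.avail (s + 1) then 1 else 0

open Classical in
lemma blk_succ (i : Fin N) (s : ℕ) :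
    R.blk i (s + 1) = R.blk i s + if R.state i s ∉ R.avail (s + 1) then 1 else 0 := rfl


lemma val_progress {t : ℕ} {i : Fin N}
    (hnw : ∀ s, s < t → (R.state i s - i).val + 1 < N) :
    ∀ s, s ≤ t → s ≤ (R.state i s - i).val + R.blk i s := by
  intro s
  induction s with
  | zero => intro _; omega
  | succ s ih =>
    intro hst
    have ihs := ih (by omega)
    have hN := hnw s (by omega)
    by_cases hP : R.state i s ∈ R.avail (s + 1)
    · have hst1 : R.state i (s + 1) = R.state i s + 1 := R.state_succ_of_mem i s hP
      have hval : (R.state i (s + 1) - i).val = (R.state i s - i).val + 1 := by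
        rw [hst1, add_sub_right_comm, Fin.val_add, Fin.val_one',
          Nat.mod_eq_of_lt (show 1 < N by omega), Nat.mod_eq_of_lt hN]
      have hblk : R.blk i (s + 1) = R.blk i s := by
        rw [R.blk_succ, if_neg (not_not_intro hP), add_zero]
      omega
    · have hst1 : R.state i (s + 1) = R.state i s := R.state_succ_of_not_mem i s hP
      have hblk : R.blk i (s + 1) = R.blk i s + 1 := by
        rw [R.blk_succ, if_pos hP]
      rw [hst1]
      omega

lemma sum_blk_le {k t : ℕ} (hdef : R.KDeficient k) (htN : t ≤ N)
    (AF : Finset (Fin N)) (hAF : ↑AF ⊆ R.active t) :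
    ∑ i ∈ AF, R.blk i t ≤ 2 * k * t := by
  classical
  have main : ∀ s, s ≤ t → ∑ i ∈ AF, R.blk i s ≤ 2 * k * s := by
    intro s
    induction s with
    | zero => intro _; simp [blk]
    | succ s ih =>
      intro hst
      have ihs := ih (by omega)
      have step : ∑ i ∈ AF, (if R.state i s ∉ R.avail (s + 1) then 1 else 0) ≤ 2 * k := by
        rw [← Finset.card_filter]
        set B := AF.filter (fun i => R.state i s ∉ R.avail (s + 1)) with hB
        have hC : ((R.avail (s + 1))ᶜ : Set (Fin N)).ncard ≤ 2 * k :=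
          hdef (s + 1) (by omega) (by omega)
        rw [Set.ncard_eq_toFinset_card _ (Set.toFinite _)] at hC
        refine le_trans (Finset.card_le_card_of_injOn (fun i => R.state i s) ?_ ?_) hC
        · intro i hi
          rw [Finset.mem_coe, Set.Finite.mem_toFinset]
          exact (Finset.mem_filter.mp (Finset.mem_coe.mp hi)).2
        · refine (R.state_injOn s).mono ?_
          intro i hi
          exact R.active_subset (by omega) (hAF (Finset.mem_filter.mp hi).1)
      calc ∑ i ∈ AF, R.blk i (s + 1)
          = ∑ i ∈ AF, (R.blk i s + if R.state i s ∉ R.avail (s + 1) then 1 else 0) := rfl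
        _ = (∑ i ∈ AF, R.blk i s) +
            ∑ i ∈ AF, (if R.state i s ∉ R.avail (s + 1) then 1 else 0) :=
            Finset.sum_add_distrib
        _ ≤ 2 * k * s + 2 * k := by omega
        _ = 2 * k * (s + 1) := by ring
  exact main t le_rfl

lemma sum_arc_le {t : ℕ} (ht1 : 1 ≤ t)
    (AF : Finset (Fin N)) (hAF : ↑AF = R.active t) :
    ∑ i ∈ AF, ((R.state i t - i).val + 1) ≤ 2 * N := by
  classical
  obtain ⟨s, rfl⟩ : ∃ s, t = s + 1 := ⟨t - 1, by omega⟩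
  set t := s + 1 with ht
  have hmem : ∀ i, i ∈ AF ↔ i ∈ R.active t := fun i => by rw [← hAF]; simp
  -- per-point coverage bound
  have hcov : ∀ x : Fin N, (AF.filter (fun i => x ∈ cInt i (R.state i t))).card ≤ 2 := by
    intro x
    by_contra hgt
    push_neg at hgt
    rw [Finset.two_lt_card_iff] at hgt
    obtain ⟨a, b, c, ha, hb, hc, hab, hac, hbc⟩ := hgt
    rw [Finset.mem_filter] at ha hb hc
    obtain ⟨haA, hax⟩ := ha
    obtain ⟨hbA, hbx⟩ := hb
    obtain ⟨hcA, hcx⟩ := hc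
    set u : Fin N → ℕ := fun l => (x - l).val with hu
    set v : Fin N → ℕ := fun l => (R.state l t - x).val with hv
    have key : ∀ m p q : Fin N, m ∈ AF → p ∈ AF → q ∈ AF → p ≠ m → q ≠ m →
        x ∈ cInt m (R.state m t) → x ∈ cInt p (R.state p t) → x ∈ cInt q (R.state q t) →
        u m ≤ u p → v m ≤ v q → False := by
      intro m p q hm hp hq hpm hqm hxm hxp hxq hup hvq
      refine R.active_nonredundant s m ((hmem m).mp hm) ?_
      refine (cInt_split hxm).trans (Set.union_subset ?_ ?_)
      · refine ((cInt_left_mono hup).trans (cInt_left_sub hxp)).trans ?_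
        exact Set.subset_biUnion_of_mem (u := fun l => cInt l (R.state l t))
          (show p ∈ R.active t \ {m} from ⟨(hmem p).mp hp, by simp [hpm]⟩)
      · refine ((cInt_right_mono hvq).trans (cInt_right_sub hxq)).trans ?_
        exact Set.subset_biUnion_of_mem (u := fun l => cInt l (R.state l t))
          (show q ∈ R.active t \ {m} from ⟨(hmem q).mp hq, by simp [hqm]⟩)
    rcases le_total (u a) (u b) with h1 | h1
    · rcases le_total (v a) (v b) with h2 | h2
      · exact key a b b haA hbA hbA hab.symm hab.symm hax hbx hbx h1 h2
      · rcases le_total (u c) (u b) with h3 | h3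
        · rcases le_total (v c) (v a) with h4 | h4
          · exact key c b a hcA hbA haA hbc hac hcx hbx hax h3 h4
          · exact key a b c haA hbA hcA hab.symm hac.symm hax hbx hcx h1 h4
        · exact key b c a hbA hcA haA hbc.symm hab hbx hcx hax h3 h2
    · rcases le_total (v b) (v a) with h2 | h2
      · exact key b a a hbA haA haA hab hab hbx hax hax h1 h2
      · rcases le_total (u c) (u a) with h3 | h3
        · rcases le_total (v c) (v b) with h4 | h4
          · exact key c a b hcA haA hbA hac hbc hcx hax hbx h3 h4
          · exact key b a c hbA haA hcA hab hbc.symm hbx hax hcx h1 h4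
        · exact key a c b haA hcA hbA hac.symm hab.symm hax hcx hbx h3 h2
  calc ∑ i ∈ AF, ((R.state i t - i).val + 1)
      = ∑ i ∈ AF, (Finset.univ.filter (fun x => x ∈ cInt i (R.state i t))).card := by
        refine Finset.sum_congr rfl (fun i _ => ?_)
        rw [← ncard_cInt i (R.state i t), Set.ncard_eq_toFinset_card _ (Set.toFinite _)]
        congr 1
        ext x
        simp only [Set.Finite.mem_toFinset, Finset.mem_filter, Finset.mem_univ, true_and]
    _ = ∑ i ∈ AF, ∑ x : Fin N, (if x ∈ cInt i (R.state i t) then 1 else 0) := by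
        refine Finset.sum_congr rfl (fun i _ => ?_)
        rw [Finset.card_filter]
    _ = ∑ x : Fin N, ∑ i ∈ AF, (if x ∈ cInt i (R.state i t) then 1 else 0) :=
        Finset.sum_comm
    _ = ∑ x : Fin N, (AF.filter (fun i => x ∈ cInt i (R.state i t))).card := by
        refine Finset.sum_congr rfl (fun x _ => ?_)
        rw [Finset.card_filter]
    _ ≤ ∑ _x : Fin N, 2 := Finset.sum_le_sum (fun x _ => hcov x)
    _ = 2 * N := by simp [Finset.sum_const, Finset.card_univ, mul_comm]

end Roundabout

/-- **Lemma (agents after `t` steps).** In the `k`-deficient roundabout model, if at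
least `r` agents (with `2k + 1 ≤ r ≤ N`) remain active after step `t ∈ [N]`, then
`t ≤ (2N - r)/(r - 2k)`. -/
theorem roundabout_agents_time_bound {N : ℕ} [NeZero N] (k : ℕ) (R : Roundabout N)
    (hdef : R.KDeficient k)
    (t : ℕ) (ht1 : 1 ≤ t) (ht : t ≤ N)
    (r : ℕ) (hr1 : 2 * k + 1 ≤ r) (hr2 : r ≤ N)
    (hA : r ≤ (R.active t).ncard) :
    (t : ℝ) ≤ (2 * (N : ℝ) - (r : ℝ)) / ((r : ℝ) - 2 * (k : ℝ)) := by
  have hN1 : 1 ≤ N := Nat.pos_of_ne_zero (NeZero.ne N)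
  have hpos : (0 : ℝ) < (r : ℝ) - 2 * (k : ℝ) := by
    have : ((2 * k + 1 : ℕ) : ℝ) ≤ ((r : ℕ) : ℝ) := Nat.cast_le.mpr hr1
    push_cast at this
    linarith
  rw [le_div_iff₀ hpos]
  rcases le_or_gt r 1 with hr | hr
  · -- trivial case r = 1, k = 0
    have hk0 : k = 0 := by omega
    have hr1' : r = 1 := by omega
    subst hk0 hr1'
    have htR : (t : ℝ) ≤ (N : ℝ) := Nat.cast_le.mpr ht
    have hNR : (1 : ℝ) ≤ (N : ℝ) := by exact_mod_cast hN1
    push_cast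
    nlinarith
  · -- main case: r ≥ 2
    classical
    have hN2 : 2 ≤ N := by omega
    set AF : Finset (Fin N) := (Set.toFinite (R.active t)).toFinset with hAFdef
    have hAFcoe : (AF : Set (Fin N)) = R.active t := Set.Finite.coe_toFinset _
    have hmem : ∀ i, i ∈ AF ↔ i ∈ R.active t := fun i => Set.Finite.mem_toFinset _
    have hAFcard : r ≤ AF.card := by
      rw [← Set.ncard_eq_toFinset_card _ (Set.toFinite _)]
      exact hA
    have hnw : ∀ i ∈ R.active t, ∀ s, s < t → (R.state i s - i).val + 1 < N := by
      intro i hi s hs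
      have hlt := (R.state i s - i).isLt
      by_contra hcon
      push_neg at hcon
      have hful : (R.state i s - i).val = N - 1 := by omega
      cases s with
      | zero =>
        rw [R.state_zero, sub_self, Fin.val_zero] at hful
        omega
      | succ s' =>
        have hi' : i ∈ R.active (s' + 1) := R.active_subset (le_of_lt hs) hi
        obtain ⟨j, hj, hji⟩ := Set.exists_ne_of_one_lt_ncard
          (show 1 < (R.active t).ncard by omega) i
        exact hji (R.eq_of_full hi' hful j (R.active_subset (le_of_lt hs) hj))
    have hprog : ∀ i ∈ AF, t ≤ (R.state i t - i).val + R.blk i t :=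
      fun i hi => R.val_progress (hnw i ((hmem i).mp hi)) t le_rfl
    have h1 : AF.card * t ≤ ∑ i ∈ AF, ((R.state i t - i).val + R.blk i t) := by
      calc AF.card * t = AF.card • t := (nsmul_eq_mul (α := ℕ) AF.card t).symm ▸ rfl
        _ ≤ _ := Finset.card_nsmul_le_sum AF _ t hprog
    have h2 : ∑ i ∈ AF, ((R.state i t - i).val + R.blk i t)
        = (∑ i ∈ AF, (R.state i t - i).val) + ∑ i ∈ AF, R.blk i t :=
      Finset.sum_add_distrib
    have h3 : ∑ i ∈ AF, R.blk i t ≤ 2 * k * t :=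
      R.sum_blk_le hdef ht AF (by rw [hAFcoe])
    have h4 : ∑ i ∈ AF, ((R.state i t - i).val + 1) ≤ 2 * N := R.sum_arc_le ht1 AF hAFcoe
    have h5 : ∑ i ∈ AF, ((R.state i t - i).val + 1)
        = (∑ i ∈ AF, (R.state i t - i).val) + AF.card := by
      rw [Finset.sum_add_distrib, Finset.sum_const, smul_eq_mul, mul_one]
    have h6 : r * t ≤ AF.card * t := Nat.mul_le_mul_right t hAFcard
    have key : r * t + r ≤ 2 * N + 2 * k * t := by
      have := h2 ▸ h1
      linarith
    have keyR : (r : ℝ) * t + r ≤ 2 * N + 2 * k * t := by exact_mod_cast key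
    linarith
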